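/- The map f_n(s,w)(θ) = θ + (2/n)s + (2/n)Arg(√(|w|²+1) − i w̄ e^{−i(nθ+s)}) is injective as a homomorphism: if f_n(s,w) is the identity map of ℝ, then s = 0 and w = 0. -/

import Mathlib

open Complex

lemma exp_pi_div_two_mul_I : Complex.exp (((Real.pi / 2 : ℝ) : ℂ) * I) = I := by
  rw [Complex.exp_mul_I, ← Complex.ofReal_cos, ← Complex.ofReal_sin,
    Real.cos_pi_div_two, Real.sin_pi_div_two]
  simp

/-- The map `f_n : ℝ × ℂ → (ℝ → ℝ)` embedding the universal cover of `SU(1,1)`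
into diffeomorphisms of `ℝ`. -/
noncomputable def fEmb (n : ℕ) (s : ℝ) (w : ℂ) (θ : ℝ) : ℝ :=
  θ + (2 / n) * s + (2 / n) * Complex.arg
    ((Real.sqrt (‖w‖ ^ 2 + 1) : ℂ)
      - I * (starRingEnd ℂ w) * Complex.exp (-I * ((n : ℝ) * θ + s)))

lemma conj_mul_exp_neg_arg (w : ℂ) :
    (starRingEnd ℂ w) * Complex.exp (-(Complex.arg (starRingEnd ℂ w) : ℂ) * I)
      = (‖w‖ : ℂ) := by
  calc (starRingEnd ℂ w) * Complex.exp (-(Complex.arg (starRingEnd ℂ w) : ℂ) * I)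
      = (‖starRingEnd ℂ w‖ : ℂ) *
        (Complex.exp ((Complex.arg (starRingEnd ℂ w) : ℂ) * I)
          * Complex.exp (-(Complex.arg (starRingEnd ℂ w) : ℂ) * I)) := by
        rw [← mul_assoc, Complex.norm_mul_exp_arg_mul_I]
    _ = (‖w‖ : ℂ) := by
        rw [← Complex.exp_add, neg_mul, add_neg_cancel, Complex.exp_zero, mul_one,
          Complex.norm_conj]

theorem fEmb_injective (n : ℕ) (hn : 0 < n) (s : ℝ) (w : ℂ)
    (h : ∀ θ : ℝ, fEmb n s w θ = θ) : s = 0 ∧ w = 0 := by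
  have hn' : (n : ℝ) ≠ 0 := Nat.cast_ne_zero.mpr hn.ne'
  have key : ∀ t : ℝ, Complex.arg ((Real.sqrt (‖w‖ ^ 2 + 1) : ℂ)
      - I * (starRingEnd ℂ w) * Complex.exp (-I * (t : ℂ))) = -s := by
    intro t
    have h1 := h ((t - s) / n)
    unfold fEmb at h1
    rw [show -I * ((((n : ℝ)) : ℂ) * ((((t - s) / (n : ℝ) : ℝ)) : ℂ) + ((s : ℝ) : ℂ))
        = -I * (t : ℂ) by
      congr 1
      exact_mod_cast congrArg (Complex.ofReal)
        (by field_simp; ring : (n : ℝ) * ((t - s) / (n : ℝ)) + s = t)] at h1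
    set b := Complex.arg ((Real.sqrt (‖w‖ ^ 2 + 1) : ℂ)
      - I * (starRingEnd ℂ w) * Complex.exp (-I * (t : ℂ))) with hb
    have h2 : (2 / (n : ℝ)) * s + (2 / n) * b = 0 := by linarith
    have h3 : s + b = 0 := by
      field_simp at h2
      linarith
    linarith
  set A : ℝ := Real.sqrt (‖w‖ ^ 2 + 1) with hAdef
  have hA : 0 < A := Real.sqrt_pos.mpr (by positivity)
  have hc := conj_mul_exp_neg_arg w
  set a : ℝ := Complex.arg (starRingEnd ℂ w) with hadef
  set c : ℂ := Complex.exp (-(a : ℂ) * I) with hcdef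
  -- first special value: t₀ = a - π/2
  have hz0 : (A : ℂ) - I * (starRingEnd ℂ w) * Complex.exp (-I * ((a - Real.pi / 2 : ℝ) : ℂ))
      = ((A + ‖w‖ : ℝ) : ℂ) := by
    have he : Complex.exp (-I * ((a - Real.pi / 2 : ℝ) : ℂ)) = c * I := by
      rw [show (-I * ((a - Real.pi / 2 : ℝ) : ℂ))
          = (-(a : ℂ)) * I + ((Real.pi / 2 : ℝ) : ℂ) * I by push_cast; ring,
        Complex.exp_add, hcdef, _root_.exp_pi_div_two_mul_I]
    rw [he]
    have h4 : I * (starRingEnd ℂ w) * (c * I) = -(‖w‖ : ℂ) := by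
      rw [show I * (starRingEnd ℂ w) * (c * I) = (I * I) * ((starRingEnd ℂ w) * c) by ring,
        Complex.I_mul_I, hc]
      ring
    rw [h4]
    push_cast
    ring
  have hs : s = 0 := by
    have k0 := key (a - Real.pi / 2)
    rw [hz0] at k0
    rw [Complex.arg_ofReal_of_nonneg (by positivity)] at k0
    linarith
  -- second special value: t₁ = a - π
  have hz1 : (A : ℂ) - I * (starRingEnd ℂ w) * Complex.exp (-I * ((a - Real.pi : ℝ) : ℂ))
      = (A : ℂ) + (‖w‖ : ℂ) * I := by
    have he : Complex.exp (-I * ((a - Real.pi : ℝ) : ℂ)) = -c := by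
      rw [show (-I * ((a - Real.pi : ℝ) : ℂ))
          = (-(a : ℂ)) * I + (Real.pi : ℂ) * I by push_cast; ring,
        Complex.exp_add, Complex.exp_pi_mul_I, hcdef]
      ring
    rw [he]
    rw [show I * (starRingEnd ℂ w) * (-c) = -(((starRingEnd ℂ w) * c) * I) by ring, hc]
    ring
  have hw : w = 0 := by
    have k1 := key (a - Real.pi)
    rw [hz1, hs, neg_zero] at k1
    rw [Complex.arg_eq_zero_iff] at k1
    have him : ((A : ℂ) + (‖w‖ : ℂ) * I).im = ‖w‖ := by simp
    rw [him] at k1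
    exact norm_eq_zero.mp k1.2
  exact ⟨hs, hw⟩
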